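/- Suppose that in ℂ the characteristic polynomial factors as X^k − c₁X^{k−1} − c₂X^{k−2} − ⋯ − c_k = ∏_{j=1}^{s} (X − α_j)^{m_j}, where α₁,…,α_s ∈ ℂ are pairwise distinct and m₁,…,m_s ≥ 1 with m₁+⋯+m_s = k. Then for every n ≥ 0, p_{n+k−1} = Σ_{(i₁,…,i_s)∈ℕ^s, i₁+⋯+i_s = n} C(i₁+m₁−1, i₁)·α₁^{i₁} ⋯ C(i_s+m_s−1, i_s)·α_s^{i_s}, where C(a,b) denotes the binomial coefficient. -/

import Mathlib

open Polynomial

lemma aux_inv_pow (a : ℂ) (mj : ℕ) :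
    (PowerSeries.mk fun i => ((i + mj - 1).choose i : ℂ) * a ^ i) *
      (1 - PowerSeries.C a * PowerSeries.X) ^ mj = 1 := by
  induction mj with
  | zero =>
    rw [pow_zero, mul_one]
    ext i
    cases i with
    | zero => simp
    | succ j => simp [Nat.choose_eq_zero_of_lt]
  | succ mj ih =>
    have key : (PowerSeries.mk fun i => ((i + (mj + 1) - 1).choose i : ℂ) * a ^ i) *
        (1 - PowerSeries.C a * PowerSeries.X) =
        PowerSeries.mk fun i => ((i + mj - 1).choose i : ℂ) * a ^ i := by
      have hass : (PowerSeries.mk fun i => ((i + (mj + 1) - 1).choose i : ℂ) * a ^ i) *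
          (PowerSeries.C a * PowerSeries.X) =
          ((PowerSeries.mk fun i => ((i + (mj + 1) - 1).choose i : ℂ) * a ^ i) *
            PowerSeries.C a) * PowerSeries.X := by ring
      ext i
      rw [mul_sub, mul_one, map_sub, hass]
      cases i with
      | zero => simp
      | succ j =>
        rw [PowerSeries.coeff_succ_mul_X, PowerSeries.coeff_mul_C, PowerSeries.coeff_mk,
          PowerSeries.coeff_mk, PowerSeries.coeff_mk]
        have h1 : j + 1 + (mj + 1) - 1 = (j + mj) + 1 := by omega
        have h2 : j + (mj + 1) - 1 = j + mj := by omega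
        have h3 : j + 1 + mj - 1 = j + mj := by omega
        rw [h1, h2, h3, Nat.choose_succ_succ' (j + mj) j]
        push_cast
        ring
    rw [pow_succ', ← mul_assoc, key, ih]

lemma aux_reflect (k : ℕ) (c : ℕ → ℂ) (s : ℕ) (α : Fin s → ℂ) (m : Fin s → ℕ)
    (hsum : ∑ j : Fin s, m j = k)
    (hfac : (X : ℂ[X]) ^ k - ∑ i ∈ Finset.range k, C (c (i + 1)) * X ^ (k - (i + 1)) =
      ∏ j : Fin s, (X - C (α j)) ^ m j) :
    (1 : ℂ[X]) - ∑ i ∈ Finset.range k, C (c (i + 1)) * X ^ (i + 1) =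
      ∏ j : Fin s, (1 - C (α j) * X) ^ m j := by
  apply Polynomial.eq_of_infinite_eval_eq
  apply Set.Infinite.mono (s := {(0 : ℂ)}ᶜ)
  swap
  · exact Set.Finite.infinite_compl (Set.finite_singleton 0)
  intro x hx
  have hx0 : x ≠ 0 := hx
  have h := congrArg (eval x⁻¹) hfac
  simp only [eval_sub, eval_pow, eval_X, eval_finset_sum, eval_mul, eval_C, eval_prod] at h
  have h2 : x ^ k * ((x⁻¹) ^ k - ∑ i ∈ Finset.range k, c (i + 1) * (x⁻¹) ^ (k - (i + 1))) =
      x ^ k * ∏ j : Fin s, (x⁻¹ - α j) ^ m j := by rw [h]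
  have hL : x ^ k * ((x⁻¹) ^ k - ∑ i ∈ Finset.range k, c (i + 1) * (x⁻¹) ^ (k - (i + 1))) =
      1 - ∑ i ∈ Finset.range k, c (i + 1) * x ^ (i + 1) := by
    rw [mul_sub, Finset.mul_sum]
    congr 1
    · rw [← mul_pow, mul_inv_cancel₀ hx0, one_pow]
    · apply Finset.sum_congr rfl
      intro i hi
      have hik : i + 1 ≤ k := Finset.mem_range.mp hi
      have hxk : x ^ k = x ^ (i + 1) * x ^ (k - (i + 1)) := by
        rw [← pow_add]; congr 1; omega
      rw [hxk]
      have hne : x ^ (k - (i + 1)) * x⁻¹ ^ (k - (i + 1)) = 1 := by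
        rw [← mul_pow, mul_inv_cancel₀ hx0, one_pow]
      linear_combination (x ^ (i + 1) * c (i + 1)) * hne
  have hR : x ^ k * ∏ j : Fin s, (x⁻¹ - α j) ^ m j =
      ∏ j : Fin s, (1 - α j * x) ^ m j := by
    rw [← hsum, ← Finset.prod_pow_eq_pow_sum, ← Finset.prod_mul_distrib]
    apply Finset.prod_congr rfl
    intro j _
    rw [← mul_pow]
    congr 1
    field_simp
  have := hL ▸ hR ▸ h2
  simp only [Set.mem_setOf_eq, eval_sub, eval_one, eval_finset_sum, eval_mul, eval_C, eval_pow,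
    eval_X, eval_prod]
  exact this

/-- If the characteristic polynomial `X^k - c₁X^{k-1} - ⋯ - c_k` factors over
`ℂ` as `∏_{j=1}^s (X - α_j)^{m_j}` with the `α_j` pairwise distinct and `m_j ≥ 1`,
`m₁ + ⋯ + m_s = k`, then for every `n ≥ 0`,
`p_{n+k-1} = ∑_{i₁+⋯+i_s = n} C(i₁+m₁-1,i₁) α₁^{i₁} ⋯ C(i_s+m_s-1,i_s) α_s^{i_s}`. -/
theorem seq_eq_sum_multiple_roots (k : ℕ) (hk : 1 ≤ k) (c : ℕ → ℂ) (p : ℕ → ℂ)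
    (hinit : ∀ i < k, p i = if i = k - 1 then 1 else 0)
    (hrec : ∀ n, p (n + k) = ∑ i ∈ Finset.range k, c (i + 1) * p (n + k - (i + 1)))
    (s : ℕ) (α : Fin s → ℂ) (m : Fin s → ℕ)
    (hdist : Function.Injective α) (hm : ∀ j, 1 ≤ m j) (hsum : ∑ j : Fin s, m j = k)
    (hfac : (X : ℂ[X]) ^ k - ∑ i ∈ Finset.range k, C (c (i + 1)) * X ^ (k - (i + 1)) =
      ∏ j : Fin s, (X - C (α j)) ^ m j)
    (n : ℕ) :
    p (n + k - 1) =
      ∑ i ∈ (Fintype.piFinset fun _ : Fin s => Finset.range (n + 1)).filter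
          (fun i => ∑ j : Fin s, i j = n),
        ∏ j : Fin s, ((i j + m j - 1).choose (i j) : ℂ) * α j ^ i j := by
  classical
  set a : ℕ → ℂ := fun N => p (N + k - 1) with ha
  set g : PowerSeries ℂ := ∏ j : Fin s, (1 - PowerSeries.C (α j) * PowerSeries.X) ^ m j with hg
  set B : PowerSeries ℂ :=
    ∏ j : Fin s, PowerSeries.mk fun i => ((i + m j - 1).choose i : ℂ) * α j ^ i with hB
  have hBg : B * g = 1 := by
    rw [hB, hg, ← Finset.prod_mul_distrib]
    rw [Finset.prod_congr rfl fun j _ => aux_inv_pow (α j) (m j), Finset.prod_const_one]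
  have hpoly := aux_reflect k c s α m hsum hfac
  have hgsum : g = 1 - ∑ i ∈ Finset.range k,
      PowerSeries.C (c (i + 1)) * PowerSeries.X ^ (i + 1) := by
    have h := congrArg (Polynomial.coeToPowerSeries.ringHom (R := ℂ)) hpoly
    rw [map_sub, map_one, map_sum, map_prod] at h
    simp only [map_mul, map_pow, map_sub, map_one, Polynomial.coeToPowerSeries.ringHom_apply,
      Polynomial.coe_C, Polynomial.coe_X] at h
    rw [hg, ← h]
  have hAg : PowerSeries.mk a * g = 1 := by
    rw [hgsum]
    ext N
    rw [mul_sub, mul_one, map_sub, Finset.mul_sum, map_sum, PowerSeries.coeff_one,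
      PowerSeries.coeff_mk]
    have hterm : ∀ i ∈ Finset.range k,
        (PowerSeries.coeff N)
          (PowerSeries.mk a * (PowerSeries.C (c (i + 1)) * PowerSeries.X ^ (i + 1))) =
        c (i + 1) * (if i + 1 ≤ N then a (N - (i + 1)) else 0) := by
      intro i hi
      have hcomm : PowerSeries.mk a * (PowerSeries.C (c (i + 1)) * PowerSeries.X ^ (i + 1)) =
          PowerSeries.C (c (i + 1)) * (PowerSeries.mk a * PowerSeries.X ^ (i + 1)) := by ring
      rw [hcomm, PowerSeries.coeff_C_mul, PowerSeries.coeff_mul_X_pow']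
      congr 1
      split_ifs with h
      · rw [PowerSeries.coeff_mk]
      · rfl
    rw [Finset.sum_congr rfl hterm]
    cases N with
    | zero =>
      have h1 : a 0 = 1 := by
        have := hinit (k - 1) (by omega)
        simp only [if_pos rfl] at this
        simpa [ha] using this
      rw [h1]
      simp
    | succ N =>
      have h1 : a (N + 1) = p (N + k) := by
        have : N + 1 + k - 1 = N + k := by omega
        rw [ha]; simp only [this]
      rw [h1, hrec N, if_neg (Nat.succ_ne_zero N)]
      rw [sub_eq_zero]
      apply Finset.sum_congr rfl
      intro i hi
      have hik : i + 1 ≤ k := Finset.mem_range.mp hi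
      congr 1
      by_cases hiN : i + 1 ≤ N + 1
      · rw [if_pos hiN, ha]
        congr 1
        omega
      · rw [if_neg hiN]
        rw [hinit (N + k - (i + 1)) (by omega), if_neg (by omega)]
  have hAB : PowerSeries.mk a = B := by
    calc PowerSeries.mk a = PowerSeries.mk a * (B * g) := by rw [hBg, mul_one]
      _ = B * (PowerSeries.mk a * g) := by ring
      _ = B := by rw [hAg, mul_one]
  have hcoeff := congrArg (PowerSeries.coeff n) hAB
  rw [PowerSeries.coeff_mk, hB, PowerSeries.coeff_prod] at hcoeff
  show a n = _
  rw [hcoeff]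
  apply Finset.sum_nbij' (i := fun l j => l j) (j := fun f => Finsupp.equivFunOnFinite.symm f)
  · intro l hl
    rw [Finset.mem_finsuppAntidiag] at hl
    rw [Finset.mem_filter]
    constructor
    · rw [Fintype.mem_piFinset]
      intro j
      rw [Finset.mem_range]
      have h1 : l j ≤ ∑ j' : Fin s, l j' :=
        Finset.single_le_sum (fun j' _ => Nat.zero_le (l j')) (Finset.mem_univ j)
      have h2 : ∑ j' : Fin s, l j' = n := hl.1
      omega
    · exact hl.1
  · intro f hf
    rw [Finset.mem_filter] at hf
    rw [Finset.mem_finsuppAntidiag]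
    constructor
    · simpa using hf.2
    · exact Finset.subset_univ _
  · intro l _
    exact Finsupp.equivFunOnFinite_symm_coe l
  · intro f _
    rfl
  · intro l _
    apply Finset.prod_congr rfl
    intro j _
    rw [PowerSeries.coeff_mk]
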